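/- Let V be a finite-dimensional real inner product space, p and q positive integers, and J : V → V a linear map with J² = p·J + q·id that is self-adjoint: ⟨J x, y⟩ = ⟨x, J y⟩ for all x, y ∈ V. Let W ⊆ V be a subspace, P the orthogonal projection onto W, and define N x = (id − P)(J x) for x ∈ W and t u = P(J u), n u = (id − P)(J u) for u ∈ W⊥. Then for every u ∈ W⊥: n(n u) = p·n u + q·u − N(t u). -/

import Mathlib

open RealInnerProductSpace

/-- With `N x = (id − P)(J x)` for `x ∈ W` and `t u = P(J u)`,
`n u = (id − P)(J u)` for `u ∈ W⊥`, one has `n(n u) = p·n u + q·u − N(t u)` for every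
`u ∈ W⊥`. -/
theorem n_squared_formula {V : Type*} [NormedAddCommGroup V] [InnerProductSpace ℝ V]
    [FiniteDimensional ℝ V]
    (p q : ℕ) (hp : 0 < p) (hq : 0 < q) (J : V →ₗ[ℝ] V)
    (hJ2 : ∀ x : V, J (J x) = (p : ℝ) • J x + (q : ℝ) • x)
    (hsym : ∀ x y : V, ⟪J x, y⟫ = ⟪x, J y⟫)
    (W : Submodule ℝ V)
    (N : V → V) (hN : ∀ x : V, N x = J x - (W.orthogonalProjectionOnto (J x) : V))
    (t : V → V) (ht : ∀ u : V, t u = (W.orthogonalProjectionOnto (J u) : V))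
    (n : V → V) (hn : ∀ u : V, n u = J u - (W.orthogonalProjectionOnto (J u) : V)) :
    ∀ u ∈ Wᗮ, n (n u) = (p : ℝ) • n u + (q : ℝ) • u - N (t u) := by
  intro u hu
  have hPu : (W.orthogonalProjectionOnto u : V) = 0 := by
    rw [Submodule.orthogonalProjectionOnto_apply_of_mem_orthogonal hu]
    simp
  simp only [hn, hN, ht, map_sub, hJ2, map_add, map_smul]
  push_cast
  simp only [Submodule.coe_add, Submodule.coe_smul, Submodule.coe_sub, hPu]
  module
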